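/- For functions f₁, g₁, f₂, g₂ : ℤ → ℝ and S(g₁,f₂) a function satisfying Δ(S(g₁,f₂)) = g₁ f₂, the composition of rank-one pseudo-difference operators satisfies f₁ Δ⁻¹ g₁ ∘ f₂ Δ⁻¹ g₂ = f₁ S(g₁,f₂) Δ⁻¹ g₂ − f₁ Δ⁻¹ ∘ Λ(S(g₁,f₂)) g₂ in the ring of formal pseudo-difference operators. -/

import Mathlib

namespace DiscreteKP

/-- The space `F` of functions on the lattice `ℤ`. -/
abbrev F := ℤ → ℝ

/-- A formal pseudo-difference operator, represented by its coefficients in the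
shift basis: `a k n` is the coefficient of `Λ^k` at the site `n`
(so `a` represents `Σ_k a_k(n) Λ^k`, with `Δ = Λ - 1`). -/
abbrev PDO := ℤ → ℤ → ℝ

/-- Composition in the ring of formal pseudo-difference operators. -/
noncomputable def pmul (a b : PDO) : PDO := fun m n => ∑' j : ℤ, a j n * b (m - j) (n + j)

/-- A function viewed as a (multiplication) operator. -/
def ofFun (f : F) : PDO := fun k n => if k = 0 then f n else 0

/-- The difference operator `Δ = Λ - 1` as a pseudo-difference operator. -/
def pdelta : PDO := fun m _ => if m = 1 then 1 else if m = 0 then -1 else 0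

/-- The formal inverse `Δ⁻¹ = Σ_{k<0} Λ^k`. -/
def pdeltaInv : PDO := fun m _ => if m < 0 then 1 else 0

/-- The formal adjoint: `(f Λ^k)* = Λ^{-k} ∘ f`. -/
def adj (a : PDO) : PDO := fun m n => a (-m) (n + m)

/-- The action of a pseudo-difference operator on a function (when defined). -/
noncomputable def applyOp (a : PDO) (f : F) : F := fun n => ∑' m : ℤ, a m n * f (n + m)

/-- Projection `P_{<0}` onto the part of strictly negative order in `Δ`
(in the shift basis this is the part with strictly negative powers of `Λ`). -/
def Pneg (a : PDO) : PDO := fun m n => if m < 0 then a m n else 0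

/-- Projection `R_+` onto the nonnegative (local difference operator) part. -/
def Ppos (a : PDO) : PDO := fun m n => if 0 ≤ m then a m n else 0

/-- `P_0`: the zero-order coefficient (in `Δ`) of an operator of `F(Δ)`,
namely `Σ_{k ≥ 0} a_k` in the shift basis. -/
noncomputable def P0 (a : PDO) : F := fun n => ∑' k : ℕ, a (k : ℤ) n

/-- `P_0(A*)`: the zero-order coefficient (in `Δ*`) of the formal adjoint of `a`,
namely `Σ_{m ≤ 0} (adj a)_m` in the shift basis. -/
noncomputable def P0star (a : PDO) : F := fun n => ∑' k : ℕ, adj a (-(k : ℤ)) n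

/-- The residue: the coefficient of `Δ⁻¹`. -/
def res (a : PDO) : F := fun n => a (-1) n

/-- The shift operator `Λ` on functions. -/
def sh (f : F) : F := fun n => f (n + 1)

/-- The backward shift `Λ⁻¹` on functions. -/
def shInv (f : F) : F := fun n => f (n - 1)

/-- The difference operator `Δ` on functions. -/
def dif (f : F) : F := fun n => f (n + 1) - f n

/-- A genuine formal pseudo-difference operator: finitely many positive-order terms. -/
def BoundedAbove (a : PDO) : Prop := ∃ d : ℤ, ∀ m n : ℤ, d < m → a m n = 0

/-- A local difference operator: a finite sum `Σ_{j=0}^d a_j Δ^j`. -/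
def IsLocal (a : PDO) : Prop := ∃ d : ℤ, ∀ m n : ℤ, (m < 0 ∨ d < m) → a m n = 0

/-- The rank-one operator `φ Δ⁻¹ ψ`. -/
noncomputable def ghost (φ ψ : F) : PDO := pmul (ofFun φ) (pmul pdeltaInv (ofFun ψ))

end DiscreteKP

namespace DiscreteKP

lemma pmul_ofFun_left (f : F) (b : PDO) (m n : ℤ) :
    pmul (ofFun f) b m n = f n * b m n := by
  unfold pmul ofFun
  rw [tsum_eq_single 0]
  · simp
  · intro j hj; simp [hj]

lemma pdeltaInv_ofFun (g : F) (m n : ℤ) :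
    pmul pdeltaInv (ofFun g) m n = if m < 0 then g (n + m) else 0 := by
  unfold pmul ofFun pdeltaInv
  rw [tsum_eq_single m]
  · by_cases h : m < 0 <;> simp [h]
  · intro j hj
    have : m - j ≠ 0 := sub_ne_zero.mpr (Ne.symm hj)
    simp [this]

lemma telescope (S : F) (n m : ℤ) (hm : m ≤ -1) :
    ∑ j ∈ Finset.Ioo m 0, (S (n + j + 1) - S (n + j)) = S n - S (n + m + 1) := by
  refine Int.le_induction_down (m := -1)
    (motive := fun m _ => ∑ j ∈ Finset.Ioo m 0, (S (n + j + 1) - S (n + j)) = S n - S (n + m + 1))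
    ?_ ?_ m hm
  · have he : Finset.Ioo (-1 : ℤ) 0 = ∅ := by
      apply Finset.eq_empty_of_forall_notMem
      intro j
      simp only [Finset.mem_Ioo, not_and_or, not_lt]
      omega
    norm_num [he]
  · intro k hk ih
    have hins : Finset.Ioo (k - 1) 0 = insert k (Finset.Ioo k 0) := by
      ext j
      simp only [Finset.mem_Ioo, Finset.mem_insert]
      omega
    rw [hins, Finset.sum_insert (by simp), ih]
    have h2 : n + (k - 1) + 1 = n + k := by ring
    rw [h2]
    ring

theorem rank_one_comp_key (g₁ f₂ g₂ S : F) (hS : ∀ n, dif S n = g₁ n * f₂ n) (m n : ℤ) :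
    pmul pdeltaInv (pmul (ofFun g₁) (pmul (ofFun f₂) (pmul pdeltaInv (ofFun g₂)))) m n
      = if m < 0 then (S n - S (n + m + 1)) * g₂ (n + m) else 0 := by
  set B := pmul (ofFun g₁) (pmul (ofFun f₂) (pmul pdeltaInv (ofFun g₂))) with hB
  have hb : ∀ j k : ℤ, B j k = g₁ k * f₂ k * (if j < 0 then g₂ (k + j) else 0) := by
    intro j k
    rw [hB, pmul_ofFun_left, pmul_ofFun_left, pdeltaInv_ofFun]
    ring
  have expand : pmul pdeltaInv B m n
      = ∑' j : ℤ, pdeltaInv j n * B (m - j) (n + j) := rfl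
  rw [expand, tsum_eq_sum (s := Finset.Ioo m 0) ?_]
  · have hcong : ∀ j ∈ Finset.Ioo m 0,
        pdeltaInv j n * B (m - j) (n + j) = (S (n + j + 1) - S (n + j)) * g₂ (n + m) := by
      intro j hj
      simp only [Finset.mem_Ioo] at hj
      have h1 : j < 0 := hj.2
      have h2 : m - j < 0 := by omega
      have h3 : n + j + (m - j) = n + m := by ring
      have hd := hS (n + j)
      unfold dif at hd
      rw [hb]
      simp only [pdeltaInv, if_pos h1, if_pos h2, h3, one_mul]
      rw [← hd]
    rw [Finset.sum_congr rfl hcong, ← Finset.sum_mul]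
    by_cases h : m < 0
    · rw [telescope S n m (by omega), if_pos h]
    · have he : Finset.Ioo m 0 = (∅ : Finset ℤ) := by
        apply Finset.eq_empty_of_forall_notMem
        intro j
        simp only [Finset.mem_Ioo, not_and_or, not_lt]
        omega
      simp [h, he]
  · intro j hj
    simp only [Finset.mem_Ioo, not_and_or, not_lt] at hj
    rcases hj with hj | hj
    · have h2 : ¬ (m - j < 0) := by omega
      rw [hb]
      simp [h2]
    · simp [pdeltaInv, not_lt.mpr hj]

/-- Composition of rank-one pseudo-difference operators:
`f₁ Δ⁻¹ g₁ ∘ f₂ Δ⁻¹ g₂ = f₁ S(g₁,f₂) Δ⁻¹ g₂ − f₁ Δ⁻¹ ∘ Λ(S(g₁,f₂)) g₂`,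
where `Δ(S(g₁,f₂)) = g₁ f₂`. -/
theorem rank_one_comp (f₁ g₁ f₂ g₂ S : F) (hS : ∀ n, dif S n = g₁ n * f₂ n) :
    pmul (ofFun f₁)
        (pmul pdeltaInv (pmul (ofFun g₁) (pmul (ofFun f₂) (pmul pdeltaInv (ofFun g₂))))) =
      pmul (ofFun fun n => f₁ n * S n) (pmul pdeltaInv (ofFun g₂))
        - pmul (ofFun f₁) (pmul pdeltaInv (ofFun fun n => sh S n * g₂ n)) := by
  funext m n
  simp only [Pi.sub_apply]
  rw [pmul_ofFun_left, pmul_ofFun_left, pmul_ofFun_left,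
    rank_one_comp_key g₁ f₂ g₂ S hS, pdeltaInv_ofFun, pdeltaInv_ofFun]
  by_cases h : m < 0
  · simp only [if_pos h, sh]
    ring
  · simp [h]

end DiscreteKP
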